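/- arXiv:1312.6843 — 2 statements merged into one kernel-verified Lean document; each statement's English description precedes it below -/
import Mathlib

section
/- Let Q and R be probability measures on a measurable space with an increasing sequence of σ-fields F_k generating F, such that R restricted to F_k is absolutely continuous with respect to Q restricted to F_k with Radon–Nikodym derivative f_k. Then Q and R are mutually singular if and only if f_k → 0 Q-almost surely. -/
open MeasureTheory Filter
open scoped ENNReal

lemma exists_limit_rnDeriv_trim
    {Ω : Type*} {mΩ : MeasurableSpace Ω}
    (F : ℕ → MeasurableSpace Ω) (hle : ∀ k, F k ≤ mΩ) (hmono : Monotone F)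
    (hgen : mΩ = ⨆ k, F k)
    (μ P : Measure Ω) [IsFiniteMeasure μ] [IsFiniteMeasure P]
    (hμP : μ ≤ P) :
    ∃ A : Ω → ℝ, Measurable A ∧
      (∀ᵐ x ∂P, Tendsto
        (fun k => ((μ.trim (hle k)).rnDeriv (P.trim (hle k)) x).toReal) atTop (nhds (A x))) ∧
      (∀ᵐ x ∂P, 0 ≤ A x) ∧
      μ = P.withDensity (fun x => ENNReal.ofReal (A x)) := by
  classical
  set ℱ : Filtration ℕ mΩ := ⟨F, hmono, hle⟩ with hℱ
  set a : ℕ → Ω → ℝ := fun k x => ((μ.trim (hle k)).rnDeriv (P.trim (hle k)) x).toReal with ha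
  have hmeas : ∀ k, Measurable[F k] (a k) :=
    fun k => (Measure.measurable_rnDeriv _ _).ennreal_toReal
  have htrim_le : ∀ k, μ.trim (hle k) ≤ P.trim (hle k) := by
    intro k
    refine (@Measure.le_iff Ω (F k) _ _).2 fun s hs => ?_
    rw [trim_measurableSet_eq (hle k) hs, trim_measurableSet_eq (hle k) hs]
    exact Measure.le_iff'.1 hμP s
  have hac : ∀ k, μ.trim (hle k) ≪ P.trim (hle k) :=
    fun k => (htrim_le k).absolutelyContinuous
  have ha_le_one : ∀ k, ∀ᵐ x ∂P, a k x ≤ 1 := by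
    intro k
    refine ae_of_ae_trim (hle k) ?_
    filter_upwards [Measure.rnDeriv_le_one_of_le (htrim_le k)] with x hx
    simpa using ENNReal.toReal_mono ENNReal.one_ne_top hx
  have hnorm : ∀ k, ∀ᵐ x ∂P, ‖a k x‖ ≤ 1 := by
    intro k
    filter_upwards [ha_le_one k] with x hx
    rw [Real.norm_eq_abs, abs_of_nonneg ENNReal.toReal_nonneg]
    exact hx
  have hint : ∀ k, Integrable (a k) P := by
    intro k
    exact (integrable_const (1 : ℝ)).mono'
      (((hmeas k).mono (hle k) le_rfl).stronglyMeasurable.aestronglyMeasurable) (hnorm k)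
  have hsetint : ∀ k s, MeasurableSet[F k] s → ∫ x in s, a k x ∂P = (μ s).toReal := by
    intro k s hs
    rw [setIntegral_trim (hle k) (hmeas k).stronglyMeasurable hs,
      Measure.setIntegral_toReal_rnDeriv (hac k) s, measureReal_def, trim_measurableSet_eq (hle k) hs]
  have hmart : Martingale a ℱ P := by
    refine ⟨fun k => (hmeas k).stronglyMeasurable, fun i j hij => ?_⟩
    refine (ae_eq_condExp_of_forall_setIntegral_eq (hle i) (hint j)
      (fun s _ _ => (hint i).integrableOn)
      (fun s hs _ => by rw [hsetint i s hs, hsetint j s (hmono hij s hs)])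
      ((hmeas i).stronglyMeasurable.aestronglyMeasurable)).symm
  have hbdd : ∀ k, eLpNorm (a k) 1 P ≤ (P Set.univ).toNNReal := by
    intro k
    refine (eLpNorm_le_of_ae_bound (hnorm k)).trans ?_
    simp [ENNReal.coe_toNNReal (measure_ne_top P _)]
  have htend := hmart.submartingale.ae_tendsto_limitProcess hbdd
  set A : Ω → ℝ := ℱ.limitProcess a P with hA
  have hAmeas : Measurable A := by
    have := MeasureTheory.Filtration.stronglyMeasurable_limit_process'
      (ℱ := ℱ) (f := a) (μ := P)
    exact this.measurable
  have hA_nonneg : ∀ᵐ x ∂P, 0 ≤ A x := by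
    filter_upwards [htend] with x hx
    exact ge_of_tendsto hx (Eventually.of_forall fun k => ENNReal.toReal_nonneg)
  have hA_le_one : ∀ᵐ x ∂P, A x ≤ 1 := by
    filter_upwards [htend, ae_all_iff.2 ha_le_one] with x hx h1
    exact le_of_tendsto hx (Eventually.of_forall h1)
  have hAint : Integrable A P := by
    refine (integrable_const (1 : ℝ)).mono' hAmeas.stronglyMeasurable.aestronglyMeasurable ?_
    filter_upwards [hA_nonneg, hA_le_one] with x h0 h1
    rw [Real.norm_eq_abs, abs_of_nonneg h0]; exact h1
  have key : ∀ s : Set Ω, ∀ k, MeasurableSet[F k] s →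
      μ s = P.withDensity (fun x => ENNReal.ofReal (A x)) s := by
    intro s k hs
    have hsm : MeasurableSet s := hle k s hs
    have h1 : Tendsto (fun j => ∫ x in s, a j x ∂P) atTop (nhds (∫ x in s, A x ∂P)) := by
      refine tendsto_integral_of_dominated_convergence (fun _ => (1 : ℝ))
        (fun j => ((hint j).aestronglyMeasurable).restrict)
        (integrable_const _) (fun j => ae_restrict_of_ae (hnorm j))
        (ae_restrict_of_ae htend)
    have h2 : Tendsto (fun j => ∫ x in s, a j x ∂P) atTop (nhds ((μ s).toReal)) := by
      refine tendsto_const_nhds.congr' ?_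
      filter_upwards [eventually_ge_atTop k] with j hj
      exact (hsetint j s (hmono hj s hs)).symm
    have h3 : ∫ x in s, A x ∂P = (μ s).toReal := tendsto_nhds_unique h1 h2
    rw [withDensity_apply _ hsm,
      ← ofReal_integral_eq_lintegral_ofReal hAint.integrableOn
        (ae_restrict_of_ae hA_nonneg), h3, ENNReal.ofReal_toReal (measure_ne_top μ s)]
  refine ⟨A, hAmeas, htend, hA_nonneg, ?_⟩
  have hgen' : mΩ = MeasurableSpace.generateFrom {s : Set Ω | ∃ k, MeasurableSet[F k] s} := by
    rw [hgen, MeasurableSpace.measurableSpace_iSup_eq]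
  refine MeasureTheory.ext_of_generate_finite _ hgen' ?_ ?_ ?_
  · rintro s ⟨i, hi⟩ t ⟨j, hj⟩ -
    exact ⟨max i j, (hmono (le_max_left i j) s hi).inter (hmono (le_max_right i j) t hj)⟩
  · rintro s ⟨k, hk⟩
    exact key s k hk
  · exact key Set.univ 0 MeasurableSet.univ

theorem mutuallySingular_iff_rnDeriv_tendsto_zero
    {Ω : Type*} {mΩ : MeasurableSpace Ω}
    (F : ℕ → MeasurableSpace Ω) (hle : ∀ k, F k ≤ mΩ) (hmono : Monotone F)
    (hgen : mΩ = ⨆ k, F k)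
    (Q R : Measure Ω) [IsProbabilityMeasure Q] [IsProbabilityMeasure R]
    (f : ℕ → Ω → ℝ)
    (hf_nonneg : ∀ k x, 0 ≤ f k x)
    (hf_meas : ∀ k, Measurable[F k] (f k))
    (hf_int : ∀ k, Integrable (f k) Q)
    (hRN : ∀ k, ∀ s : Set Ω, MeasurableSet[F k] s →
      R s = ENNReal.ofReal (∫ x in s, f k x ∂Q)) :
    Q.MutuallySingular R ↔
      ∀ᵐ x ∂Q, Tendsto (fun k => f k x) atTop (nhds 0) := by
  classical
  set P : Measure Ω := Q + R with hP
  have hQP : Q ≪ P := Measure.absolutelyContinuous_of_le (Measure.le_add_right le_rfl)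
  set a' : ℕ → Ω → ℝ≥0∞ := fun k => (Q.trim (hle k)).rnDeriv (P.trim (hle k)) with ha'
  set b' : ℕ → Ω → ℝ≥0∞ := fun k => (R.trim (hle k)).rnDeriv (P.trim (hle k)) with hb'
  have hQle : Q ≤ P := Measure.le_add_right le_rfl
  have hRle : R ≤ P := Measure.le_add_left le_rfl
  obtain ⟨A, hAmeas, hAtend, hAnonneg, hQA⟩ :=
    exists_limit_rnDeriv_trim F hle hmono hgen Q P hQle
  obtain ⟨B, hBmeas, hBtend, hBnonneg, hRB⟩ :=
    exists_limit_rnDeriv_trim F hle hmono hgen R P hRle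
  -- trim inequalities / absolute continuity
  have htrim_le : ∀ (ν : Measure Ω) [IsFiniteMeasure ν], ν ≤ P →
      ∀ k, ν.trim (hle k) ≤ P.trim (hle k) := by
    intro ν _ hν k
    refine (@Measure.le_iff Ω (F k) _ _).2 fun s hs => ?_
    rw [trim_measurableSet_eq (hle k) hs, trim_measurableSet_eq (hle k) hs]
    exact Measure.le_iff'.1 hν s
  have hQac : ∀ k, Q.trim (hle k) ≪ P.trim (hle k) :=
    fun k => (htrim_le Q hQle k).absolutelyContinuous
  have hRac : ∀ k, R.trim (hle k) ≪ P.trim (hle k) :=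
    fun k => (htrim_le R hRle k).absolutelyContinuous
  -- key pointwise relation: ofReal (f k) * a' k = b' k  P-a.e.
  have h_fab : ∀ k, ∀ᵐ x ∂P, ENNReal.ofReal (f k x) * a' k x = b' k x := by
    intro k
    refine ae_of_ae_trim (hle k) ?_
    refine ae_eq_of_forall_setLIntegral_eq_of_sigmaFinite
      ((hf_meas k).ennreal_ofReal.mul (Measure.measurable_rnDeriv _ _))
      (Measure.measurable_rnDeriv _ _) (fun s hs _ => ?_)
    have hQk : (P.trim (hle k)).withDensity (a' k) = Q.trim (hle k) :=
      Measure.withDensity_rnDeriv_eq _ _ (hQac k)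
    calc ∫⁻ x in s, ENNReal.ofReal (f k x) * a' k x ∂(P.trim (hle k))
        = ∫⁻ x in s, ENNReal.ofReal (f k x) ∂((P.trim (hle k)).withDensity (a' k)) := by
          rw [restrict_withDensity hs,
            lintegral_withDensity_eq_lintegral_mul _ (Measure.measurable_rnDeriv _ _)
              (hf_meas k).ennreal_ofReal]
          congr 1
          ext x
          rw [Pi.mul_apply, mul_comm]
      _ = ∫⁻ x in s, ENNReal.ofReal (f k x) ∂(Q.trim (hle k)) := by rw [hQk]
      _ = ∫⁻ x in s, ENNReal.ofReal (f k x) ∂Q := by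
          rw [restrict_trim (hle k) Q hs, lintegral_trim (hle k) (hf_meas k).ennreal_ofReal]
      _ = R s := by
          rw [hRN k s hs,
            ofReal_integral_eq_lintegral_ofReal (hf_int k).integrableOn
              (ae_of_all _ fun x => hf_nonneg k x)]
      _ = ∫⁻ x in s, b' k x ∂(P.trim (hle k)) := by
          rw [Measure.setLIntegral_rnDeriv' (hRac k) hs, trim_measurableSet_eq (hle k) hs]
  have h_fab_real : ∀ᵐ x ∂P, ∀ k, f k x * (a' k x).toReal = (b' k x).toReal := by
    rw [ae_all_iff]
    intro k
    filter_upwards [h_fab k] with x hx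
    rw [← hx, ENNReal.toReal_mul, ENNReal.toReal_ofReal (hf_nonneg k x)]
  -- Q-a.e. positivity of a' k
  have ha_pos : ∀ᵐ x ∂Q, ∀ k, 0 < (a' k x).toReal := by
    rw [ae_all_iff]
    intro k
    have hlt : ∀ᵐ x ∂Q, a' k x < ∞ :=
      hQP.ae_le (ae_of_ae_trim (hle k) (Measure.rnDeriv_lt_top _ _))
    have hne : ∀ᵐ x ∂Q, a' k x ≠ 0 := by
      have hsm : MeasurableSet[F k] {x | a' k x = 0} :=
        Measure.measurable_rnDeriv _ _ (measurableSet_singleton 0)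
      have hq : Q {x | a' k x = 0} = 0 := by
        rw [← trim_measurableSet_eq (hle k) hsm,
          ← Measure.withDensity_rnDeriv_eq _ _ (hQac k),
          withDensity_apply _ hsm]
        rw [setLIntegral_congr_fun hsm (fun x hx => hx)]
        simp
      rw [ae_iff]
      simpa using hq
    filter_upwards [hlt, hne] with x h1 h2
    exact ENNReal.toReal_pos h2 h1.ne
  -- Q-a.e. positivity of A
  have hA_pos : ∀ᵐ x ∂Q, 0 < A x := by
    have hq : Q {x | ¬ 0 < A x} = 0 := by
      have hsm : MeasurableSet {x | ¬ 0 < A x} := by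
        rw [show {x | ¬ 0 < A x} = {x | 0 < A x}ᶜ from rfl]
        exact (measurableSet_lt measurable_const hAmeas).compl
      have hzero : ∫⁻ x in {x | ¬ 0 < A x}, ENNReal.ofReal (A x) ∂P
          = ∫⁻ x in {x | ¬ 0 < A x}, (0 : ℝ≥0∞) ∂P := by
        refine setLIntegral_congr_fun hsm (fun x hx => ?_)
        simp only [Set.mem_setOf_eq, not_lt] at hx
        simp [ENNReal.ofReal_eq_zero.2 hx]
      rw [hQA, withDensity_apply _ hsm, hzero]
      simp
    rw [ae_iff]
    exact hq
  -- pointwise iff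
  have hpt : ∀ᵐ x ∂Q,
      (Tendsto (fun k => f k x) atTop (nhds 0) ↔ B x = 0) := by
    filter_upwards [hQP.ae_le hAtend, hQP.ae_le hBtend, hQP.ae_le h_fab_real,
      ha_pos, hA_pos] with x hxA hxB hxfab hxa hxApos
    constructor
    · intro hf0
      have h1 : Tendsto (fun k => f k x * (a' k x).toReal) atTop (nhds (0 * A x)) :=
        hf0.mul hxA
      rw [zero_mul] at h1
      have h2 : Tendsto (fun k => (b' k x).toReal) atTop (nhds 0) := by
        refine h1.congr fun k => hxfab k
      exact tendsto_nhds_unique hxB h2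
    · intro hB0
      have h1 : Tendsto (fun k => (b' k x).toReal / (a' k x).toReal) atTop
          (nhds (B x / A x)) := hxB.div hxA hxApos.ne'
      rw [hB0, zero_div] at h1
      refine h1.congr fun k => ?_
      rw [← hxfab k, mul_div_assoc, div_self (hxa k).ne', mul_one]
  constructor
  · intro hsing
    obtain ⟨t, htm, hQt, hRt⟩ := hsing
    have hB0 : ∀ᵐ x ∂Q, B x = 0 := by
      have h1 : ∀ᵐ x ∂P, x ∈ tᶜ → ENNReal.ofReal (B x) = 0 := by
        rw [← ae_restrict_iff' htm.compl]
        rw [hRB, withDensity_apply _ htm.compl] at hRt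
        exact (lintegral_eq_zero_iff (hBmeas.ennreal_ofReal)).1 hRt
      have h2 : ∀ᵐ x ∂Q, x ∈ tᶜ := by
        rw [ae_iff]
        simpa using hQt
      filter_upwards [hQP.ae_le h1, h2, hQP.ae_le hBnonneg] with x hx1 hx2 hx3
      have := hx1 hx2
      rw [ENNReal.ofReal_eq_zero] at this
      linarith
    filter_upwards [hpt, hB0] with x h1 h2
    exact h1.2 h2
  · intro htend0
    have hB0 : ∀ᵐ x ∂Q, B x = 0 := by
      filter_upwards [hpt, htend0] with x h1 h2
      exact h1.1 h2
    refine ⟨{x | B x ≠ 0}, ?_, ?_, ?_⟩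
    · exact (hBmeas (measurableSet_singleton 0)).compl
    · rw [ae_iff] at hB0
      simpa using hB0
    · have hcm : MeasurableSet {x | B x ≠ 0}ᶜ := (hBmeas (measurableSet_singleton 0)).compl.compl
      have hzero : ∫⁻ x in {x | B x ≠ 0}ᶜ, ENNReal.ofReal (B x) ∂P
          = ∫⁻ x in {x | B x ≠ 0}ᶜ, (0 : ℝ≥0∞) ∂P := by
        refine setLIntegral_congr_fun hcm (fun x hx => ?_)
        simp only [Set.mem_compl_iff, Set.mem_setOf_eq, not_not] at hx
        simp [hx]
      rw [hRB, withDensity_apply _ hcm, hzero]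
      simp
end

section
/- There exists a random vector (Y¹, Y², ξ¹, ξ²) such that Y¹ and Y² are each uniform on {-1,1}, ξ¹ and ξ² are each standard Gaussian, Y¹ is independent of ξ¹, Y² is independent of ξ², Y¹+ξ¹ = Y²+ξ² almost surely, and P(Y¹ = Y²) < 1. -/
open MeasureTheory ProbabilityTheory
open scoped ENNReal

namespace RadGaussCoupling

open Set Real

noncomputable def p : ℝ := 4 * gaussianPDFReal 0 1 2

lemma gpdf_eq (x : ℝ) :
    gaussianPDFReal 0 1 x = (Real.sqrt (2 * Real.pi))⁻¹ * Real.exp (-(x ^ 2) / 2) := by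
  simp [gaussianPDFReal]

lemma p_pos : 0 < p := by
  have := gaussianPDFReal_pos 0 1 2 one_ne_zero
  unfold p; linarith

lemma p_lt_one : p < 1 := by
  unfold p
  rw [gpdf_eq]
  have h1 : (1 : ℝ) ≤ Real.sqrt (2 * Real.pi) := by
    rw [show (1:ℝ) = Real.sqrt 1 by simp]
    exact Real.sqrt_le_sqrt (by nlinarith [Real.pi_gt_three])
  have hinv : (Real.sqrt (2 * Real.pi))⁻¹ ≤ 1 := by
    rw [inv_le_one_iff₀]; right; exact h1
  have hexp : Real.exp (-((2:ℝ) ^ 2) / 2) < 1/4 := by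
    rw [show -((2:ℝ)^2)/2 = -2 by norm_num, Real.exp_neg]
    have h2 : (4:ℝ) < Real.exp 2 := by
      have : Real.exp 2 = Real.exp 1 * Real.exp 1 := by
        rw [← Real.exp_add]; norm_num
      nlinarith [Real.exp_one_gt_d9]
    rw [inv_lt_comm₀ (by positivity) (by norm_num)]
    linarith
  nlinarith [Real.exp_pos (-((2:ℝ)^2)/2), Real.sqrt_nonneg (2*Real.pi),
    inv_nonneg.2 (Real.sqrt_nonneg (2*Real.pi))]

lemma φ_ge {x : ℝ} (hx : x ∈ Ioo (-2 : ℝ) 2) : p / 4 ≤ gaussianPDFReal 0 1 x := by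
  have h : p / 4 = gaussianPDFReal 0 1 2 := by unfold p; ring
  rw [h, gpdf_eq, gpdf_eq]
  have hx1 := hx.1
  have hx2 := hx.2
  have hexp : Real.exp (-(2 ^ 2 : ℝ) / 2) ≤ Real.exp (-(x ^ 2) / 2) := by
    apply Real.exp_le_exp.2
    nlinarith
  have h0 : (0 : ℝ) ≤ (Real.sqrt (2 * Real.pi))⁻¹ := by positivity
  exact mul_le_mul_of_nonneg_left hexp h0

noncomputable def Up : Measure ℝ := ENNReal.ofReal (p/2) • volume.restrict (Ioo (-1) 1)
noncomputable def Q : Measure ℝ := ENNReal.ofReal (p/4) • volume.restrict (Ioo (-2) 2)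
noncomputable def gW : ℝ → ℝ≥0∞ :=
  fun x => ENNReal.ofReal (gaussianPDFReal 0 1 x - Set.indicator (Ioo (-2) 2) (fun _ => p/4) x)
noncomputable def W : Measure ℝ := volume.withDensity gW

lemma Q_eq : volume.withDensity (Set.indicator (Ioo (-2:ℝ) 2) fun _ => ENNReal.ofReal (p/4)) = Q := by
  rw [withDensity_indicator measurableSet_Ioo, withDensity_const]; rfl

lemma Q_add_W : Q + W = gaussianReal 0 1 := by
  rw [gaussianReal_of_var_ne_zero 0 one_ne_zero, ← Q_eq, W,
    ← withDensity_add_left (measurable_const.indicator measurableSet_Ioo) gW]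
  congr 1
  funext x
  simp only [Pi.add_apply, gW, gaussianPDF]
  by_cases hx : x ∈ Ioo (-2:ℝ) 2
  · rw [Set.indicator_of_mem hx, Set.indicator_of_mem hx,
      ← ENNReal.ofReal_add (by linarith [p_pos]) (by linarith [φ_ge hx])]
    norm_num
  · rw [Set.indicator_of_notMem hx, Set.indicator_of_notMem hx]
    simp

lemma Up_univ : Up Set.univ = ENNReal.ofReal p := by
  rw [Up, Measure.smul_apply, Measure.restrict_apply MeasurableSet.univ, Set.univ_inter,
    Real.volume_Ioo, smul_eq_mul, ← ENNReal.ofReal_mul (by linarith [p_pos])]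
  norm_num

lemma Q_univ : Q Set.univ = ENNReal.ofReal p := by
  rw [Q, Measure.smul_apply, Measure.restrict_apply MeasurableSet.univ, Set.univ_inter,
    Real.volume_Ioo, smul_eq_mul, ← ENNReal.ofReal_mul (by linarith [p_pos])]
  norm_num

lemma P_add_P' : ENNReal.ofReal p + W Set.univ = 1 := by
  have h := congrArg (fun m : Measure ℝ => m Set.univ) Q_add_W
  simp only [Measure.add_apply] at h
  rw [Q_univ] at h
  rw [h]
  exact measure_univ

lemma inv4 : (4:ℝ≥0∞)⁻¹ = 2⁻¹ * 2⁻¹ := by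
  rw [show (4:ℝ≥0∞) = 2*2 by norm_num,
    ENNReal.mul_inv (Or.inl (by norm_num)) (Or.inl ENNReal.ofNat_ne_top)]

lemma q_add_q : (4:ℝ≥0∞)⁻¹ + 4⁻¹ = 2⁻¹ := by
  rw [inv4, ← mul_add, ENNReal.inv_two_add_inv_two, mul_one]

lemma map_const_add (c a b : ℝ) :
    (volume.restrict (Ioo a b)).map (fun x => c + x) = volume.restrict (Ioo (c+a) (c+b)) := by
  ext s hs
  rw [Measure.map_apply (measurable_const_add c) hs, Measure.restrict_apply hs,
    Measure.restrict_apply (measurable_const_add c hs)]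
  have h : (fun x => c + x) ⁻¹' s ∩ Ioo a b = (fun x => c + x) ⁻¹' (s ∩ Ioo (c+a) (c+b)) := by
    rw [Set.preimage_inter]
    congr 1
    ext x
    simp only [Set.mem_preimage, Set.mem_Ioo]
    constructor <;> intro h <;> exact ⟨by linarith [h.1], by linarith [h.2]⟩
  rw [h, measure_preimage_add]

lemma Ioo_split :
    volume.restrict (Ioo (-2:ℝ) 0) + volume.restrict (Ioo (0:ℝ) 2)
      = volume.restrict (Ioo (-2:ℝ) 2) := by
  rw [← Measure.restrict_union (by
      rw [Set.disjoint_left]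
      intro x hx1 hx2
      exact absurd hx2.1 (not_lt.2 hx1.2.le)) measurableSet_Ioo]
  apply Measure.restrict_congr_set
  rw [Filter.eventuallyEq_set]
  have h0 : ∀ᵐ x : ℝ, x ≠ 0 := by
    rw [ae_iff]
    convert Real.volume_singleton (a := 0) using 2
    ext x; simp
  filter_upwards [h0] with x hx
  simp only [Set.mem_union, Set.mem_Ioo]
  constructor
  · rintro (⟨h1,h2⟩|⟨h1,h2⟩) <;> constructor <;> linarith
  · rintro ⟨h1, h2⟩
    rcases lt_or_gt_of_ne hx with h | h
    · exact Or.inl ⟨h1, h⟩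
    · exact Or.inr ⟨h, h2⟩

lemma two_translates :
    (2⁻¹:ℝ≥0∞) • (Up.map (fun u => (1:ℝ) + u) + Up.map (fun u => (-1:ℝ) + u)) = Q := by
  rw [Up, Measure.map_smul, Measure.map_smul, map_const_add, map_const_add]
  norm_num
  rw [smul_smul, smul_smul, ← smul_add, add_comm (volume.restrict (Ioo (0:ℝ) 2)), Ioo_split, Q]
  congr 1
  rw [show ((2:ℝ≥0∞))⁻¹ = ENNReal.ofReal 2⁻¹ by
      rw [ENNReal.ofReal_inv_of_pos (by norm_num)]; norm_num,
    ← ENNReal.ofReal_mul (by norm_num)]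
  congr 1
  ring

def T (a b : ℝ) : ℝ → ℝ×ℝ×ℝ×ℝ := fun u => (a, b, b + u, a + u)
def Sm (a : ℝ) : ℝ → ℝ×ℝ×ℝ×ℝ := fun w => (a, a, w, w)

lemma measurable_T (a b : ℝ) : Measurable (T a b) := by unfold T; fun_prop
lemma measurable_Sm (a : ℝ) : Measurable (Sm a) := by unfold Sm; fun_prop

noncomputable def μtot : Measure (ℝ×ℝ×ℝ×ℝ) :=
  (4⁻¹:ℝ≥0∞) • Up.map (T 1 1) + (4⁻¹:ℝ≥0∞) • Up.map (T 1 (-1)) + (4⁻¹:ℝ≥0∞) • Up.map (T (-1) 1)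
    + (4⁻¹:ℝ≥0∞) • Up.map (T (-1) (-1))
    + ((2⁻¹:ℝ≥0∞) • W.map (Sm 1) + (2⁻¹:ℝ≥0∞) • W.map (Sm (-1)))

lemma μtot_map {β : Type} [MeasurableSpace β] {f : ℝ×ℝ×ℝ×ℝ → β} (hf : Measurable f) :
    μtot.map f = (4⁻¹:ℝ≥0∞) • Up.map (f ∘ T 1 1) + (4⁻¹:ℝ≥0∞) • Up.map (f ∘ T 1 (-1))
      + (4⁻¹:ℝ≥0∞) • Up.map (f ∘ T (-1) 1) + (4⁻¹:ℝ≥0∞) • Up.map (f ∘ T (-1) (-1))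
      + ((2⁻¹:ℝ≥0∞) • W.map (f ∘ Sm 1) + (2⁻¹:ℝ≥0∞) • W.map (f ∘ Sm (-1))) := by
  unfold μtot
  rw [Measure.map_add _ _ hf, Measure.map_add _ _ hf, Measure.map_add _ _ hf,
    Measure.map_add _ _ hf, Measure.map_add _ _ hf, Measure.map_smul, Measure.map_smul, Measure.map_smul,
    Measure.map_smul, Measure.map_smul, Measure.map_smul,
    Measure.map_map hf (measurable_T _ _), Measure.map_map hf (measurable_T _ _),
    Measure.map_map hf (measurable_T _ _), Measure.map_map hf (measurable_T _ _),
    Measure.map_map hf (measurable_Sm _), Measure.map_map hf (measurable_Sm _)]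

lemma scalar1 (Pq P' a b : ℝ≥0∞) (h : Pq + P' = 1) :
    4⁻¹*(Pq*a) + 4⁻¹*(Pq*a) + 4⁻¹*(Pq*b) + 4⁻¹*(Pq*b) + (2⁻¹*(P'*a) + 2⁻¹*(P'*b))
      = 2⁻¹*a + 2⁻¹*b := by
  calc 4⁻¹*(Pq*a) + 4⁻¹*(Pq*a) + 4⁻¹*(Pq*b) + 4⁻¹*(Pq*b) + (2⁻¹*(P'*a) + 2⁻¹*(P'*b))
      = (4⁻¹+4⁻¹)*(Pq*a) + (4⁻¹+4⁻¹)*(Pq*b) + (2⁻¹*(P'*a) + 2⁻¹*(P'*b)) := by ring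
    _ = 2⁻¹*((Pq+P')*a) + 2⁻¹*((Pq+P')*b) := by rw [q_add_q]; ring
    _ = 2⁻¹*a + 2⁻¹*b := by rw [h, one_mul, one_mul]

lemma scalar1' (Pq P' a b : ℝ≥0∞) (h : Pq + P' = 1) :
    4⁻¹*(Pq*a) + 4⁻¹*(Pq*b) + 4⁻¹*(Pq*a) + 4⁻¹*(Pq*b) + (2⁻¹*(P'*a) + 2⁻¹*(P'*b))
      = 2⁻¹*a + 2⁻¹*b := by
  calc 4⁻¹*(Pq*a) + 4⁻¹*(Pq*b) + 4⁻¹*(Pq*a) + 4⁻¹*(Pq*b) + (2⁻¹*(P'*a) + 2⁻¹*(P'*b))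
      = 4⁻¹*(Pq*a) + 4⁻¹*(Pq*a) + 4⁻¹*(Pq*b) + 4⁻¹*(Pq*b) + (2⁻¹*(P'*a) + 2⁻¹*(P'*b)) := by
        ring
    _ = 2⁻¹*a + 2⁻¹*b := scalar1 Pq P' a b h

lemma scalar2 (a b w : ℝ≥0∞) :
    4⁻¹*a + 4⁻¹*b + 4⁻¹*a + 4⁻¹*b + (2⁻¹*w + 2⁻¹*w) = 2⁻¹*(a+b) + w := by
  calc 4⁻¹*a + 4⁻¹*b + 4⁻¹*a + 4⁻¹*b + (2⁻¹*w + 2⁻¹*w)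
      = (4⁻¹+4⁻¹)*a + (4⁻¹+4⁻¹)*b + (2⁻¹+2⁻¹)*w := by ring
    _ = 2⁻¹*(a+b) + w := by rw [q_add_q, ENNReal.inv_two_add_inv_two, one_mul]; ring

lemma scalar2' (a b w : ℝ≥0∞) :
    4⁻¹*a + 4⁻¹*a + 4⁻¹*b + 4⁻¹*b + (2⁻¹*w + 2⁻¹*w) = 2⁻¹*(a+b) + w := by
  rw [show 4⁻¹*a + 4⁻¹*a + 4⁻¹*b + 4⁻¹*b + (2⁻¹*w + 2⁻¹*w)
      = 4⁻¹*a + 4⁻¹*b + 4⁻¹*a + 4⁻¹*b + (2⁻¹*w + 2⁻¹*w) from by ring]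
  exact scalar2 a b w

lemma map_Y₁ : μtot.map (fun v : ℝ×ℝ×ℝ×ℝ => v.1)
    = (2⁻¹:ℝ≥0∞) • Measure.dirac (1:ℝ) + (2⁻¹:ℝ≥0∞) • Measure.dirac (-1:ℝ) := by
  rw [μtot_map measurable_fst]
  rw [show ((fun v : ℝ×ℝ×ℝ×ℝ => v.1) ∘ T 1 1) = fun _ => (1:ℝ) from rfl,
    show ((fun v : ℝ×ℝ×ℝ×ℝ => v.1) ∘ T 1 (-1)) = fun _ => (1:ℝ) from rfl,
    show ((fun v : ℝ×ℝ×ℝ×ℝ => v.1) ∘ T (-1) 1) = fun _ => (-1:ℝ) from rfl,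
    show ((fun v : ℝ×ℝ×ℝ×ℝ => v.1) ∘ T (-1) (-1)) = fun _ => (-1:ℝ) from rfl,
    show ((fun v : ℝ×ℝ×ℝ×ℝ => v.1) ∘ Sm 1) = fun _ => (1:ℝ) from rfl,
    show ((fun v : ℝ×ℝ×ℝ×ℝ => v.1) ∘ Sm (-1)) = fun _ => (-1:ℝ) from rfl,
    Measure.map_const, Measure.map_const, Measure.map_const, Measure.map_const, Up_univ]
  ext s hs
  simp only [Measure.add_apply, Measure.smul_apply, smul_eq_mul]
  exact scalar1 _ _ _ _ P_add_P'

lemma map_Y₂ : μtot.map (fun v : ℝ×ℝ×ℝ×ℝ => v.2.1)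
    = (2⁻¹:ℝ≥0∞) • Measure.dirac (1:ℝ) + (2⁻¹:ℝ≥0∞) • Measure.dirac (-1:ℝ) := by
  rw [μtot_map (by fun_prop)]
  rw [show ((fun v : ℝ×ℝ×ℝ×ℝ => v.2.1) ∘ T 1 1) = fun _ => (1:ℝ) from rfl,
    show ((fun v : ℝ×ℝ×ℝ×ℝ => v.2.1) ∘ T 1 (-1)) = fun _ => (-1:ℝ) from rfl,
    show ((fun v : ℝ×ℝ×ℝ×ℝ => v.2.1) ∘ T (-1) 1) = fun _ => (1:ℝ) from rfl,
    show ((fun v : ℝ×ℝ×ℝ×ℝ => v.2.1) ∘ T (-1) (-1)) = fun _ => (-1:ℝ) from rfl,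
    show ((fun v : ℝ×ℝ×ℝ×ℝ => v.2.1) ∘ Sm 1) = fun _ => (1:ℝ) from rfl,
    show ((fun v : ℝ×ℝ×ℝ×ℝ => v.2.1) ∘ Sm (-1)) = fun _ => (-1:ℝ) from rfl,
    Measure.map_const, Measure.map_const, Measure.map_const, Measure.map_const, Up_univ]
  ext s hs
  simp only [Measure.add_apply, Measure.smul_apply, smul_eq_mul]
  exact scalar1' _ _ _ _ P_add_P'

lemma map_ξ₁ : μtot.map (fun v : ℝ×ℝ×ℝ×ℝ => v.2.2.1) = gaussianReal 0 1 := by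
  rw [μtot_map (by fun_prop)]
  rw [show ((fun v : ℝ×ℝ×ℝ×ℝ => v.2.2.1) ∘ T 1 1) = fun u => (1:ℝ) + u from rfl,
    show ((fun v : ℝ×ℝ×ℝ×ℝ => v.2.2.1) ∘ T 1 (-1)) = fun u => (-1:ℝ) + u from rfl,
    show ((fun v : ℝ×ℝ×ℝ×ℝ => v.2.2.1) ∘ T (-1) 1) = fun u => (1:ℝ) + u from rfl,
    show ((fun v : ℝ×ℝ×ℝ×ℝ => v.2.2.1) ∘ T (-1) (-1)) = fun u => (-1:ℝ) + u from rfl,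
    show ((fun v : ℝ×ℝ×ℝ×ℝ => v.2.2.1) ∘ Sm 1) = fun w => w from rfl,
    show ((fun v : ℝ×ℝ×ℝ×ℝ => v.2.2.1) ∘ Sm (-1)) = fun w => w from rfl,
    Measure.map_id', ← Q_add_W, ← two_translates]
  ext s hs
  simp only [Measure.add_apply, Measure.smul_apply, smul_eq_mul]
  exact scalar2 _ _ _

lemma map_ξ₂ : μtot.map (fun v : ℝ×ℝ×ℝ×ℝ => v.2.2.2) = gaussianReal 0 1 := by
  rw [μtot_map (by fun_prop)]
  rw [show ((fun v : ℝ×ℝ×ℝ×ℝ => v.2.2.2) ∘ T 1 1) = fun u => (1:ℝ) + u from rfl,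
    show ((fun v : ℝ×ℝ×ℝ×ℝ => v.2.2.2) ∘ T 1 (-1)) = fun u => (1:ℝ) + u from rfl,
    show ((fun v : ℝ×ℝ×ℝ×ℝ => v.2.2.2) ∘ T (-1) 1) = fun u => (-1:ℝ) + u from rfl,
    show ((fun v : ℝ×ℝ×ℝ×ℝ => v.2.2.2) ∘ T (-1) (-1)) = fun u => (-1:ℝ) + u from rfl,
    show ((fun v : ℝ×ℝ×ℝ×ℝ => v.2.2.2) ∘ Sm 1) = fun w => w from rfl,
    show ((fun v : ℝ×ℝ×ℝ×ℝ => v.2.2.2) ∘ Sm (-1)) = fun w => w from rfl,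
    Measure.map_id', ← Q_add_W, ← two_translates]
  ext s hs
  simp only [Measure.add_apply, Measure.smul_apply, smul_eq_mul]
  exact scalar2' _ _ _

lemma smul_prod' {α β : Type} [MeasurableSpace α] [MeasurableSpace β] (c : ℝ≥0∞)
    (μ : Measure α) (ν : Measure β) [IsFiniteMeasure μ] [IsFiniteMeasure ν]
    [IsFiniteMeasure (c • μ)] : (c • μ).prod ν = c • μ.prod ν := by
  refine Measure.prod_eq fun s t hs ht => ?_
  simp only [Measure.smul_apply, smul_eq_mul, Measure.prod_prod, mul_assoc]

lemma pair₁ : μtot.map (fun v : ℝ×ℝ×ℝ×ℝ => (v.1, v.2.2.1))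
    = ((2⁻¹:ℝ≥0∞) • Measure.dirac (1:ℝ)
        + (2⁻¹:ℝ≥0∞) • Measure.dirac (-1:ℝ)).prod (gaussianReal 0 1) := by
  haveI h1 : IsFiniteMeasure ((2⁻¹:ℝ≥0∞) • Measure.dirac (1:ℝ)) := by
    constructor
    simp [Measure.smul_apply]
  haveI h2 : IsFiniteMeasure ((2⁻¹:ℝ≥0∞) • Measure.dirac (-1:ℝ)) := by
    constructor
    simp [Measure.smul_apply]
  rw [Measure.add_prod, smul_prod', smul_prod', Measure.dirac_prod, Measure.dirac_prod,
    ← Q_add_W, Measure.map_add _ _ measurable_prodMk_left,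
    Measure.map_add _ _ measurable_prodMk_left, ← two_translates, Measure.map_smul,
    Measure.map_add _ _ measurable_prodMk_left, Measure.map_smul,
    Measure.map_add _ _ measurable_prodMk_left]
  rw [μtot_map (by fun_prop)]
  rw [show ((fun v : ℝ×ℝ×ℝ×ℝ => (v.1, v.2.2.1)) ∘ T 1 1)
        = (Prod.mk (1:ℝ)) ∘ (fun u => (1:ℝ) + u) from rfl,
    show ((fun v : ℝ×ℝ×ℝ×ℝ => (v.1, v.2.2.1)) ∘ T 1 (-1))
        = (Prod.mk (1:ℝ)) ∘ (fun u => (-1:ℝ) + u) from rfl,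
    show ((fun v : ℝ×ℝ×ℝ×ℝ => (v.1, v.2.2.1)) ∘ T (-1) 1)
        = (Prod.mk (-1:ℝ)) ∘ (fun u => (1:ℝ) + u) from rfl,
    show ((fun v : ℝ×ℝ×ℝ×ℝ => (v.1, v.2.2.1)) ∘ T (-1) (-1))
        = (Prod.mk (-1:ℝ)) ∘ (fun u => (-1:ℝ) + u) from rfl,
    show ((fun v : ℝ×ℝ×ℝ×ℝ => (v.1, v.2.2.1)) ∘ Sm 1) = Prod.mk (1:ℝ) from rfl,
    show ((fun v : ℝ×ℝ×ℝ×ℝ => (v.1, v.2.2.1)) ∘ Sm (-1)) = Prod.mk (-1:ℝ) from rfl,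
    ← Measure.map_map measurable_prodMk_left (measurable_const_add 1),
    ← Measure.map_map measurable_prodMk_left (measurable_const_add (-1)),
    ← Measure.map_map measurable_prodMk_left (measurable_const_add 1),
    ← Measure.map_map measurable_prodMk_left (measurable_const_add (-1))]
  ext s hs
  simp only [Measure.add_apply, Measure.smul_apply, smul_eq_mul]
  rw [inv4]
  ring

lemma pair₂ : μtot.map (fun v : ℝ×ℝ×ℝ×ℝ => (v.2.1, v.2.2.2))
    = ((2⁻¹:ℝ≥0∞) • Measure.dirac (1:ℝ)
        + (2⁻¹:ℝ≥0∞) • Measure.dirac (-1:ℝ)).prod (gaussianReal 0 1) := by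
  haveI h1 : IsFiniteMeasure ((2⁻¹:ℝ≥0∞) • Measure.dirac (1:ℝ)) := by
    constructor
    simp [Measure.smul_apply]
  haveI h2 : IsFiniteMeasure ((2⁻¹:ℝ≥0∞) • Measure.dirac (-1:ℝ)) := by
    constructor
    simp [Measure.smul_apply]
  rw [Measure.add_prod, smul_prod', smul_prod', Measure.dirac_prod, Measure.dirac_prod,
    ← Q_add_W, Measure.map_add _ _ measurable_prodMk_left,
    Measure.map_add _ _ measurable_prodMk_left, ← two_translates, Measure.map_smul,
    Measure.map_add _ _ measurable_prodMk_left, Measure.map_smul,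
    Measure.map_add _ _ measurable_prodMk_left]
  rw [μtot_map (by fun_prop)]
  rw [show ((fun v : ℝ×ℝ×ℝ×ℝ => (v.2.1, v.2.2.2)) ∘ T 1 1)
        = (Prod.mk (1:ℝ)) ∘ (fun u => (1:ℝ) + u) from rfl,
    show ((fun v : ℝ×ℝ×ℝ×ℝ => (v.2.1, v.2.2.2)) ∘ T 1 (-1))
        = (Prod.mk (-1:ℝ)) ∘ (fun u => (1:ℝ) + u) from rfl,
    show ((fun v : ℝ×ℝ×ℝ×ℝ => (v.2.1, v.2.2.2)) ∘ T (-1) 1)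
        = (Prod.mk (1:ℝ)) ∘ (fun u => (-1:ℝ) + u) from rfl,
    show ((fun v : ℝ×ℝ×ℝ×ℝ => (v.2.1, v.2.2.2)) ∘ T (-1) (-1))
        = (Prod.mk (-1:ℝ)) ∘ (fun u => (-1:ℝ) + u) from rfl,
    show ((fun v : ℝ×ℝ×ℝ×ℝ => (v.2.1, v.2.2.2)) ∘ Sm 1) = Prod.mk (1:ℝ) from rfl,
    show ((fun v : ℝ×ℝ×ℝ×ℝ => (v.2.1, v.2.2.2)) ∘ Sm (-1)) = Prod.mk (-1:ℝ) from rfl,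
    ← Measure.map_map measurable_prodMk_left (measurable_const_add 1),
    ← Measure.map_map measurable_prodMk_left (measurable_const_add 1),
    ← Measure.map_map measurable_prodMk_left (measurable_const_add (-1)),
    ← Measure.map_map measurable_prodMk_left (measurable_const_add (-1))]
  ext s hs
  simp only [Measure.add_apply, Measure.smul_apply, smul_eq_mul]
  rw [inv4]
  ring

lemma μtot_univ : μtot Set.univ = 1 := by
  have eT : ∀ a b : ℝ, (Up.map (T a b)) Set.univ = ENNReal.ofReal p := by
    intro a b
    rw [Measure.map_apply (measurable_T a b) MeasurableSet.univ, Set.preimage_univ, Up_univ]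
  have eS : ∀ a : ℝ, (W.map (Sm a)) Set.univ = W Set.univ := by
    intro a
    rw [Measure.map_apply (measurable_Sm a) MeasurableSet.univ, Set.preimage_univ]
  unfold μtot
  simp only [Measure.add_apply, Measure.smul_apply, smul_eq_mul, eT, eS]
  calc 4⁻¹ * ENNReal.ofReal p + 4⁻¹ * ENNReal.ofReal p + 4⁻¹ * ENNReal.ofReal p
        + 4⁻¹ * ENNReal.ofReal p + (2⁻¹ * W Set.univ + 2⁻¹ * W Set.univ)
      = ((4⁻¹+4⁻¹) + (4⁻¹+4⁻¹)) * ENNReal.ofReal p + (2⁻¹+2⁻¹) * W Set.univ := by ring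
    _ = ENNReal.ofReal p + W Set.univ := by
        rw [q_add_q, ENNReal.inv_two_add_inv_two, one_mul, one_mul]
    _ = 1 := P_add_P'

instance : IsProbabilityMeasure μtot := ⟨μtot_univ⟩

lemma ae_sum_eq : ∀ᵐ v ∂μtot, v.1 + v.2.2.1 = v.2.1 + v.2.2.2 := by
  rw [ae_iff]
  have hN : MeasurableSet {v : ℝ×ℝ×ℝ×ℝ | ¬ (v.1 + v.2.2.1 = v.2.1 + v.2.2.2)} :=
    (measurableSet_eq_fun (by fun_prop) (by fun_prop)).compl
  have kT : ∀ a b : ℝ,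
      (Up.map (T a b)) {v : ℝ×ℝ×ℝ×ℝ | ¬ (v.1 + v.2.2.1 = v.2.1 + v.2.2.2)} = 0 := by
    intro a b
    rw [Measure.map_apply (measurable_T a b) hN]
    have h : T a b ⁻¹' {v : ℝ×ℝ×ℝ×ℝ | ¬ (v.1 + v.2.2.1 = v.2.1 + v.2.2.2)} = ∅ := by
      ext u
      simp only [T, Set.mem_preimage, Set.mem_setOf_eq, Set.mem_empty_iff_false, iff_false,
        not_not]
      ring
    rw [h, measure_empty]
  have kS : ∀ a : ℝ,
      (W.map (Sm a)) {v : ℝ×ℝ×ℝ×ℝ | ¬ (v.1 + v.2.2.1 = v.2.1 + v.2.2.2)} = 0 := by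
    intro a
    rw [Measure.map_apply (measurable_Sm a) hN]
    have h : Sm a ⁻¹' {v : ℝ×ℝ×ℝ×ℝ | ¬ (v.1 + v.2.2.1 = v.2.1 + v.2.2.2)} = ∅ := by
      ext w
      simp only [Sm, Set.mem_preimage, Set.mem_setOf_eq, Set.mem_empty_iff_false, iff_false,
        not_not]
    rw [h, measure_empty]
  unfold μtot
  simp only [Measure.add_apply, Measure.smul_apply, smul_eq_mul, kT, kS, mul_zero, add_zero,
    zero_add]

lemma Pq_ne_zero : ENNReal.ofReal p ≠ 0 := by
  simp only [ne_eq, ENNReal.ofReal_eq_zero, not_le]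
  exact p_pos

lemma final_lt : μtot {v : ℝ×ℝ×ℝ×ℝ | v.1 = v.2.1} < 1 := by
  have hD : MeasurableSet {v : ℝ×ℝ×ℝ×ℝ | v.1 = v.2.1} :=
    measurableSet_eq_fun measurable_fst (by fun_prop)
  have kT : ∀ a b : ℝ, (Up.map (T a b)) {v : ℝ×ℝ×ℝ×ℝ | v.1 = v.2.1}
      = Up {u : ℝ | a = b} := by
    intro a b
    rw [Measure.map_apply (measurable_T a b) hD]
    rfl
  have kS : ∀ a : ℝ, (W.map (Sm a)) {v : ℝ×ℝ×ℝ×ℝ | v.1 = v.2.1} = W Set.univ := by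
    intro a
    rw [Measure.map_apply (measurable_Sm a) hD]
    have h : Sm a ⁻¹' {v : ℝ×ℝ×ℝ×ℝ | v.1 = v.2.1} = Set.univ := by
      ext w; simp [Sm]
    rw [h]
  have e1 : Up {u : ℝ | True} = ENNReal.ofReal p := by
    rw [show {u : ℝ | True} = Set.univ from Set.setOf_true, Up_univ]
  have e2 : Up {u : ℝ | (1:ℝ) = -1} = 0 := by
    rw [show {u : ℝ | (1:ℝ) = -1} = (∅ : Set ℝ) from by ext u; norm_num]
    exact measure_empty
  have e3 : Up {u : ℝ | (-1:ℝ) = 1} = 0 := by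
    rw [show {u : ℝ | (-1:ℝ) = 1} = (∅ : Set ℝ) from by ext u; norm_num]
    exact measure_empty
  have hval : μtot {v : ℝ×ℝ×ℝ×ℝ | v.1 = v.2.1}
      = 2⁻¹ * ENNReal.ofReal p + W Set.univ := by
    unfold μtot
    simp only [Measure.add_apply, Measure.smul_apply, smul_eq_mul, kT, kS]
    rw [e1, e2, e3]
    calc 4⁻¹ * ENNReal.ofReal p + 4⁻¹ * 0 + 4⁻¹ * 0 + 4⁻¹ * ENNReal.ofReal p
          + (2⁻¹ * W Set.univ + 2⁻¹ * W Set.univ)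
        = (4⁻¹+4⁻¹) * ENNReal.ofReal p + (2⁻¹+2⁻¹) * W Set.univ := by ring
      _ = 2⁻¹ * ENNReal.ofReal p + W Set.univ := by
          rw [q_add_q, ENNReal.inv_two_add_inv_two, one_mul]
  rw [hval, ← P_add_P']
  have hW_le : W Set.univ ≤ 1 := by
    rw [← P_add_P']
    exact le_add_self
  have hW_ne_top : W Set.univ ≠ ∞ := ne_top_of_le_ne_top ENNReal.one_ne_top hW_le
  rw [ENNReal.add_lt_add_iff_right hW_ne_top]
  calc 2⁻¹ * ENNReal.ofReal p < 1 * ENNReal.ofReal p := by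
        rw [ENNReal.mul_lt_mul_iff_left Pq_ne_zero ENNReal.ofReal_ne_top]
        exact ENNReal.inv_lt_one.mpr ENNReal.one_lt_two
    _ = ENNReal.ofReal p := one_mul _

lemma indep₁ : IndepFun (fun v : ℝ×ℝ×ℝ×ℝ => v.1) (fun v : ℝ×ℝ×ℝ×ℝ => v.2.2.1) μtot := by
  rw [indepFun_iff_map_prod_eq_prod_map_map measurable_fst.aemeasurable
    (by fun_prop : Measurable fun v : ℝ×ℝ×ℝ×ℝ => v.2.2.1).aemeasurable]
  rw [map_Y₁, map_ξ₁]
  exact pair₁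

lemma indep₂ : IndepFun (fun v : ℝ×ℝ×ℝ×ℝ => v.2.1) (fun v : ℝ×ℝ×ℝ×ℝ => v.2.2.2) μtot := by
  rw [indepFun_iff_map_prod_eq_prod_map_map
    (by fun_prop : Measurable fun v : ℝ×ℝ×ℝ×ℝ => v.2.1).aemeasurable
    (by fun_prop : Measurable fun v : ℝ×ℝ×ℝ×ℝ => v.2.2.2).aemeasurable]
  rw [map_Y₂, map_ξ₂]
  exact pair₂

end RadGaussCoupling

theorem exists_coupling_rademacher_gaussian :
    ∃ (Ω : Type) (mΩ : MeasurableSpace Ω) (μ : Measure Ω)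
      (Y₁ Y₂ ξ₁ ξ₂ : Ω → ℝ),
      IsProbabilityMeasure μ ∧
      Measurable Y₁ ∧ Measurable Y₂ ∧ Measurable ξ₁ ∧ Measurable ξ₂ ∧
      μ.map Y₁ = (2⁻¹ : ℝ≥0∞) • Measure.dirac (1 : ℝ)
                  + (2⁻¹ : ℝ≥0∞) • Measure.dirac (-1 : ℝ) ∧
      μ.map Y₂ = (2⁻¹ : ℝ≥0∞) • Measure.dirac (1 : ℝ)
                  + (2⁻¹ : ℝ≥0∞) • Measure.dirac (-1 : ℝ) ∧
      μ.map ξ₁ = gaussianReal 0 1 ∧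
      μ.map ξ₂ = gaussianReal 0 1 ∧
      IndepFun Y₁ ξ₁ μ ∧ IndepFun Y₂ ξ₂ μ ∧
      (∀ᵐ ω ∂μ, Y₁ ω + ξ₁ ω = Y₂ ω + ξ₂ ω) ∧
      μ {ω | Y₁ ω = Y₂ ω} < 1 := by
  refine ⟨ℝ×ℝ×ℝ×ℝ, inferInstance, RadGaussCoupling.μtot,
    (fun v => v.1), (fun v => v.2.1), (fun v => v.2.2.1), (fun v => v.2.2.2),
    inferInstance, measurable_fst, by fun_prop, by fun_prop, by fun_prop,
    RadGaussCoupling.map_Y₁, RadGaussCoupling.map_Y₂,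
    RadGaussCoupling.map_ξ₁, RadGaussCoupling.map_ξ₂,
    RadGaussCoupling.indep₁, RadGaussCoupling.indep₂,
    RadGaussCoupling.ae_sum_eq, RadGaussCoupling.final_lt⟩
end
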